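/- For every ξ ∈ H: exp( i·S^μ(ξ^R̄) − i·B(ξ^R̄, J·ξ^Ī) − (i/2)·B(J·ξ^Ī, J·ξ^Ī) − (1/2)·g(ξ^Ī, ξ^Ī) + (i/2)·B(ξ,ξ) + (1/4)·g(ξ,ξ) ) = exp( (1/4)·g(ξ^R, ξ^R) − (1/4)·g(ξ^I, ξ^I) − (i/2)·g(ξ^R, ξ^I) ) · exp( i·C(ξ^R) + C(ξ^I) ) · exp( (i/2)·C(J·v) − (1/2)·C(v) ). -/

import Mathlib

/-- Factorization identity for the amplitude of a linear theory
modified by a linear (source-like) term.  With `V ⊆ H` a closed Lagrangian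
subspace, `A := η₀ + V ⊆ H`, `B` bilinear inducing `ω`, `S^μ` the affine action,
`C` the linear term, `v` the unique element of `V` with `J·v ∈ A`, and the unique
decompositions `ξ = ξR + J·ξI` (`ξR, ξI ∈ V`) and `ξ = ξR̄ + J·ξĪ`
(`ξR̄ ∈ A`, `ξĪ ∈ V`), one has for every `ξ ∈ H`:
`exp( i·S^μ(ξR̄) − i·B(ξR̄, J·ξĪ) − (i/2)·B(J·ξĪ, J·ξĪ) − (1/2)·g(ξĪ,ξĪ)
  + (i/2)·B(ξ,ξ) + (1/4)·g(ξ,ξ) )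
= exp( (1/4)·g(ξR,ξR) − (1/4)·g(ξI,ξI) − (i/2)·g(ξR,ξI) )
  · exp( i·C(ξR) + C(ξI) ) · exp( (i/2)·C(J·v) − (1/2)·C(v) )`. -/
theorem statement12
    {H : Type*} [NormedAddCommGroup H] [InnerProductSpace ℂ H] [CompleteSpace H]
    (V : Submodule ℝ H) (hVclosed : IsClosed (V : Set H))
    (hVlag : ∀ x : H, x ∈ V ↔ ∀ w ∈ V, (1/2 : ℝ) * (inner ℂ x w : ℂ).im = 0)
    (η₀ : H)
    (B : H → H → ℝ)
    (hB₁ : ∀ y : H, IsLinearMap ℝ (fun x => B x y))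
    (hB₂ : ∀ x : H, IsLinearMap ℝ (B x))
    (hωB : ∀ x y : H,
      (1/2 : ℝ) * (inner ℂ x y : ℂ).im = (1/2 : ℝ) * (B x y - B y x))
    (Sμ : H → ℝ)
    (hSμ : ∀ η : H, (∃ w ∈ V, η = η₀ + w) → ∀ ζ ∈ V,
      Sμ (η + ζ) = Sμ η - (1/2 : ℝ) * B ζ ζ - B η ζ)
    (C : H →ₗ[ℝ] ℝ)
    (hC : ∀ ζ ∈ V, ∀ η : H, (∃ w ∈ V, η = η₀ + w) →
      C ζ = 2 * ((1/2 : ℝ) * (inner ℂ ζ η : ℂ).im))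
    (hSμC : ∀ η : H, (∃ w ∈ V, η = η₀ + w) →
      Sμ η = (1/2 : ℝ) * C η - (1/2 : ℝ) * B η η)
    (v : H) (hv : v ∈ V) (hvA : ∃ w ∈ V, Complex.I • v = η₀ + w)
    (hvuniq : ∀ v' : H, v' ∈ V → (∃ w ∈ V, Complex.I • v' = η₀ + w) → v' = v)
    (ξ : H)
    (ξR ξI : H) (hξR : ξR ∈ V) (hξI : ξI ∈ V)
    (hdec : ξ = ξR + Complex.I • ξI)
    (ξRb ξIb : H) (hξRb : ∃ w ∈ V, ξRb = η₀ + w) (hξIb : ξIb ∈ V)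
    (hdecb : ξ = ξRb + Complex.I • ξIb) :
    Complex.exp (Complex.I * ((Sμ ξRb : ℝ) : ℂ)
        - Complex.I * ((B ξRb (Complex.I • ξIb) : ℝ) : ℂ)
        - (Complex.I / 2) * ((B (Complex.I • ξIb) (Complex.I • ξIb) : ℝ) : ℂ)
        - (1/2 : ℂ) * (((inner ℂ ξIb ξIb : ℂ).re : ℝ) : ℂ)
        + (Complex.I / 2) * ((B ξ ξ : ℝ) : ℂ)
        + (1/4 : ℂ) * (((inner ℂ ξ ξ : ℂ).re : ℝ) : ℂ))
      = Complex.exp ((1/4 : ℂ) * (((inner ℂ ξR ξR : ℂ).re : ℝ) : ℂ)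
          - (1/4 : ℂ) * (((inner ℂ ξI ξI : ℂ).re : ℝ) : ℂ)
          - (Complex.I / 2) * (((inner ℂ ξR ξI : ℂ).re : ℝ) : ℂ))
        * Complex.exp (Complex.I * ((C ξR : ℝ) : ℂ) + ((C ξI : ℝ) : ℂ))
        * Complex.exp ((Complex.I / 2) * ((C (Complex.I • v) : ℝ) : ℂ)
          - (1/2 : ℂ) * ((C v : ℝ) : ℂ)) := by
  classical
  -- Lagrangian: inner products of V-elements are real
  have hIm : ∀ a ∈ V, ∀ b ∈ V, (inner ℂ a b : ℂ).im = 0 := by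
    intro a ha b hb
    have h := (hVlag a).mp ha b hb
    linarith
  -- antisymmetric part of B
  have hBsub : ∀ x y : H, B x y - B y x = (inner ℂ x y : ℂ).im := by
    intro x y
    have h := hωB x y
    linarith
  -- re-symmetry of inner
  have hresymm : ∀ a b : H, (inner ℂ a b : ℂ).re = (inner ℂ b a : ℂ).re := by
    intro a b; rw [← inner_conj_symm]; exact Complex.conj_re _
  -- V ∩ iV = 0 style uniqueness
  have hzero : ∀ a ∈ V, ∀ b ∈ V, a + Complex.I • b = 0 → a = 0 ∧ b = 0 := by
    intro a ha b hb hab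
    have h1 : (inner ℂ a (a + Complex.I • b) : ℂ) = 0 := by
      rw [hab, inner_zero_right]
    rw [inner_add_right, inner_smul_right] at h1
    have h2 := congrArg Complex.re h1
    simp [Complex.add_re, Complex.mul_re] at h2
    have him : (inner ℂ a b : ℂ).im = 0 := hIm a ha b hb
    have ha0 : a = 0 := by
      have hzero' : (inner ℂ a a : ℂ) = 0 := by
        apply Complex.ext
        · simpa [him] using h2
        · exact hIm a ha a ha
      exact inner_self_eq_zero.mp hzero'
    refine ⟨ha0, ?_⟩
    have hb0 : Complex.I • b = 0 := by
      rw [ha0, zero_add] at hab; exact hab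
    have := smul_eq_zero.mp hb0
    rcases this with h | h
    · exact absurd h Complex.I_ne_zero
    · exact h
  -- decomposition relations
  obtain ⟨w, hw, hwEq⟩ := hξRb
  obtain ⟨w', hw', hw'Eq⟩ := hvA
  have hm1 : ξRb - Complex.I • v ∈ V := by
    have heq : ξRb - Complex.I • v = w - w' := by rw [hwEq, hw'Eq]; abel
    rw [heq]; exact sub_mem hw hw'
  have hab : ξR - (ξRb - Complex.I • v) + Complex.I • (ξI - (ξIb + v)) = 0 := by
    have h1 : ξR + Complex.I • ξI = ξRb + Complex.I • ξIb := by
      rw [← hdec, ← hdecb]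
    have h2 : ξR - (ξRb - Complex.I • v)
        + (Complex.I • ξI - (Complex.I • ξIb + Complex.I • v))
        = (ξR + Complex.I • ξI) - (ξRb + Complex.I • ξIb) := by abel
    rw [smul_sub, smul_add, h2, h1, sub_self]
  have hkey := hzero (ξR - (ξRb - Complex.I • v)) (sub_mem hξR hm1)
    (ξI - (ξIb + v)) (sub_mem hξI (add_mem hξIb hv)) hab
  have hRb : ξRb = ξR + Complex.I • v := by
    have := sub_eq_zero.mp hkey.1
    rw [this]; abel
  have hIb : ξIb = ξI - v := by
    have h := sub_eq_zero.mp hkey.2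
    exact eq_sub_of_add_eq h.symm
  -- C values as real inner products
  have hCR : C ξR = (inner ℂ ξR v : ℂ).re := by
    have h := hC ξR hξR (Complex.I • v) ⟨w', hw', hw'Eq⟩
    rw [inner_smul_right] at h
    simpa [Complex.mul_im] using h
  have hCI : C ξI = (inner ℂ ξI v : ℂ).re := by
    have h := hC ξI hξI (Complex.I • v) ⟨w', hw', hw'Eq⟩
    rw [inner_smul_right] at h
    simpa [Complex.mul_im] using h
  have hCv : C v = (inner ℂ v v : ℂ).re := by
    have h := hC v hv (Complex.I • v) ⟨w', hw', hw'Eq⟩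
    rw [inner_smul_right] at h
    simpa [Complex.mul_im] using h
  -- bilinear expansion of B ξ ξ
  have hBexp : B ξ ξ = B ξRb ξRb + B ξRb (Complex.I • ξIb)
      + B (Complex.I • ξIb) ξRb + B (Complex.I • ξIb) (Complex.I • ξIb) := by
    set u := Complex.I • ξIb with hu
    have e1 : ∀ z : H, B (ξRb + u) z = B ξRb z + B u z := fun z => (hB₁ z).map_add ξRb u
    have e2 : ∀ x : H, B x (ξRb + u) = B x ξRb + B x u := fun x => (hB₂ x).map_add ξRb u
    calc B ξ ξ = B (ξRb + u) (ξRb + u) := by rw [← hdecb]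
      _ = _ := by rw [e1 (ξRb + u), e2 ξRb, e2 u]; ring
  -- Sμ value
  have hS : Sμ ξRb = (1/2 : ℝ) * C ξRb - (1/2 : ℝ) * B ξRb ξRb := hSμC ξRb ⟨w, hw, hwEq⟩
  have hCRb : C ξRb = C ξR + C (Complex.I • v) := by
    rw [hRb]; exact map_add C _ _
  -- im of ⟪ξRb, I ξIb⟫
  have hImRbu : (inner ℂ ξRb (Complex.I • ξIb) : ℂ).im = (inner ℂ ξRb ξIb : ℂ).re := by
    rw [inner_smul_right]; simp
  -- g(ξRb, ξIb) = g(ξR, ξI) - C ξR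
  have hgRbIb : (inner ℂ ξRb ξIb : ℂ).re = (inner ℂ ξR ξI : ℂ).re - C ξR := by
    rw [hRb, hIb, hCR]
    simp only [inner_add_left, inner_sub_right, inner_smul_left, Complex.conj_I,
      Complex.add_re, Complex.sub_re, Complex.mul_re, Complex.mul_im,
      Complex.neg_re, Complex.neg_im, Complex.I_re, Complex.I_im,
      hIm v hv ξI hξI, hIm v hv v hv]
    ring
  -- g(ξ,ξ) = g(ξR,ξR) + g(ξI,ξI)
  have hgxx : (inner ℂ ξ ξ : ℂ).re = (inner ℂ ξR ξR : ℂ).re + (inner ℂ ξI ξI : ℂ).re := by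
    rw [hdec]
    rw [inner_add_left, inner_add_right, inner_add_right, inner_smul_left,
      inner_smul_right, inner_smul_right, inner_smul_left]
    simp only [Complex.conj_I, Complex.add_re, Complex.mul_re, Complex.neg_re,
      Complex.neg_im, Complex.I_re, Complex.I_im, Complex.mul_im,
      hIm ξR hξR ξI hξI, hIm ξI hξI ξR hξR, hIm ξI hξI ξI hξI]
    ring
  -- g(ξIb,ξIb) = g(ξI,ξI) - 2 g(ξI,v) + g(v,v)
  have hgIbIb : (inner ℂ ξIb ξIb : ℂ).re
      = (inner ℂ ξI ξI : ℂ).re - 2 * (inner ℂ ξI v : ℂ).re + (inner ℂ v v : ℂ).re := by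
    rw [hIb]
    rw [inner_sub_left, inner_sub_right, inner_sub_right]
    simp only [Complex.sub_re]
    have := hresymm v ξI
    linarith
  -- the two real identities
  have hre : -(1/2 : ℝ) * (inner ℂ ξIb ξIb : ℂ).re + (1/4 : ℝ) * (inner ℂ ξ ξ : ℂ).re
      = (1/4 : ℝ) * (inner ℂ ξR ξR : ℂ).re - (1/4 : ℝ) * (inner ℂ ξI ξI : ℂ).re
        + C ξI - (1/2 : ℝ) * C v := by
    rw [hgIbIb, hgxx, hCI, hCv]; ring
  have him : Sμ ξRb - B ξRb (Complex.I • ξIb)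
      - (1/2 : ℝ) * B (Complex.I • ξIb) (Complex.I • ξIb) + (1/2 : ℝ) * B ξ ξ
      = -(1/2 : ℝ) * (inner ℂ ξR ξI : ℂ).re + C ξR + (1/2 : ℝ) * C (Complex.I • v) := by
    have hasym := hBsub ξRb (Complex.I • ξIb)
    rw [hImRbu, hgRbIb] at hasym
    rw [hS, hCRb, hBexp]
    linarith
  -- assemble
  rw [← Complex.exp_add, ← Complex.exp_add]
  congr 1
  have formL : Complex.I * ((Sμ ξRb : ℝ) : ℂ)
        - Complex.I * ((B ξRb (Complex.I • ξIb) : ℝ) : ℂ)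
        - (Complex.I / 2) * ((B (Complex.I • ξIb) (Complex.I • ξIb) : ℝ) : ℂ)
        - (1/2 : ℂ) * (((inner ℂ ξIb ξIb : ℂ).re : ℝ) : ℂ)
        + (Complex.I / 2) * ((B ξ ξ : ℝ) : ℂ)
        + (1/4 : ℂ) * (((inner ℂ ξ ξ : ℂ).re : ℝ) : ℂ)
      = ((-(1/2 : ℝ) * (inner ℂ ξIb ξIb : ℂ).re + (1/4 : ℝ) * (inner ℂ ξ ξ : ℂ).re : ℝ) : ℂ)
        + ((Sμ ξRb - B ξRb (Complex.I • ξIb)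
          - (1/2 : ℝ) * B (Complex.I • ξIb) (Complex.I • ξIb)
          + (1/2 : ℝ) * B ξ ξ : ℝ) : ℂ) * Complex.I := by
    push_cast; ring
  have formR : ((1/4 : ℂ) * (((inner ℂ ξR ξR : ℂ).re : ℝ) : ℂ)
          - (1/4 : ℂ) * (((inner ℂ ξI ξI : ℂ).re : ℝ) : ℂ)
          - (Complex.I / 2) * (((inner ℂ ξR ξI : ℂ).re : ℝ) : ℂ))
        + (Complex.I * ((C ξR : ℝ) : ℂ) + ((C ξI : ℝ) : ℂ))
        + ((Complex.I / 2) * ((C (Complex.I • v) : ℝ) : ℂ)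
          - (1/2 : ℂ) * ((C v : ℝ) : ℂ))
      = (((1/4 : ℝ) * (inner ℂ ξR ξR : ℂ).re - (1/4 : ℝ) * (inner ℂ ξI ξI : ℂ).re
          + C ξI - (1/2 : ℝ) * C v : ℝ) : ℂ)
        + ((-(1/2 : ℝ) * (inner ℂ ξR ξI : ℂ).re + C ξR
          + (1/2 : ℝ) * C (Complex.I • v) : ℝ) : ℂ) * Complex.I := by
    push_cast; ring
  rw [formL, formR, hre, him]
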